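/- Let G ⊂ ℝ^m be a one-dimensional subspace. Then there exists an index ν ∈ {1,…,m} and a sign choice such that the orthogonal projection e_ν^⊥ of the standard basis vector e_ν onto the orthogonal complement G^⊥ satisfies |e_ν^⊥ − e_ν| ≥ 1/√m. Consequently, |w − e_ν| ≥ 1/√m for all w ∈ G^⊥. -/

import Mathlib

open scoped RealInnerProductSpace


/-- If G ⊂ ℝ^m is a one-dimensional subspace, then there is an index ν such that the
orthogonal projection of e_ν onto G^⊥ is at distance ≥ 1/√m from e_ν; consequently
|w − e_ν| ≥ 1/√m for all w ∈ G^⊥. -/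
theorem stmt3 {m : ℕ} (G : Submodule ℝ (EuclideanSpace ℝ (Fin m)))
    (hG : Module.finrank ℝ G = 1) :
    ∃ ν : Fin m,
      1 / Real.sqrt m ≤
        ‖(Submodule.orthogonalProjectionOnto Gᗮ (EuclideanSpace.single ν 1) :
            EuclideanSpace ℝ (Fin m)) - EuclideanSpace.single ν 1‖ ∧
      ∀ w ∈ Gᗮ, 1 / Real.sqrt m ≤ ‖w - EuclideanSpace.single ν 1‖ := by
  -- m is positive
  have hm : 0 < m := by
    by_contra h
    push_neg at h
    interval_cases m
    have : Module.finrank ℝ G ≤ Module.finrank ℝ (EuclideanSpace ℝ (Fin 0)) :=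
      Submodule.finrank_le G
    simp [hG, finrank_euclideanSpace] at this
  -- get a unit vector g in G
  have hne : G ≠ ⊥ := by
    intro h
    rw [h] at hG
    simp at hG
  obtain ⟨v, hvG, hv0⟩ := Submodule.exists_mem_ne_zero_of_ne_bot hne
  set g : EuclideanSpace ℝ (Fin m) := ‖v‖⁻¹ • v with hg
  have hgG : g ∈ G := G.smul_mem _ hvG
  have hgnorm : ‖g‖ = 1 := norm_smul_inv_norm hv0
  -- g has a coordinate of absolute value ≥ 1/√m
  have hsum : ∑ i, g i ^ 2 = 1 := by
    have h := EuclideanSpace.norm_eq g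
    rw [hgnorm] at h
    simp only [Real.norm_eq_abs, sq_abs] at h
    exact Real.sqrt_eq_one.mp h.symm
  have hex : ∃ ν : Fin m, 1 / (m : ℝ) ≤ g ν ^ 2 := by
    by_contra h
    push_neg at h
    have : (∑ i, g i ^ 2) < ∑ _i : Fin m, 1 / (m : ℝ) := by
      apply Finset.sum_lt_sum_of_nonempty
      · exact Finset.univ_nonempty_iff.mpr ⟨⟨0, hm⟩⟩
      · intro i _; exact h i
    rw [hsum] at this
    simp only [Finset.sum_const, Finset.card_univ, Fintype.card_fin, nsmul_eq_mul] at this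
    rw [mul_one_div, div_self (by positivity : (m : ℝ) ≠ 0)] at this
    exact lt_irrefl 1 this
  obtain ⟨ν, hν⟩ := hex
  have hν' : 1 / Real.sqrt m ≤ |g ν| := by
    have h1 : Real.sqrt (1 / (m : ℝ)) ≤ Real.sqrt (g ν ^ 2) := Real.sqrt_le_sqrt hν
    rw [Real.sqrt_sq_eq_abs] at h1
    rwa [one_div, Real.sqrt_inv, ← one_div] at h1
  -- main bound for any w ∈ Gᗮ
  have key : ∀ w ∈ Gᗮ, 1 / Real.sqrt m ≤ ‖w - EuclideanSpace.single ν 1‖ := by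
    intro w hw
    have hinner : (inner ℝ g (w) : ℝ) = 0 := (Submodule.mem_orthogonal G w).mp hw g hgG
    have hinner2 : (inner ℝ g ((EuclideanSpace.single ν 1 : EuclideanSpace ℝ (Fin m))) : ℝ) = g ν := by
      rw [EuclideanSpace.inner_single_right]
      simp
    have hcs : |(inner ℝ g (w - EuclideanSpace.single ν 1) : ℝ)| ≤ ‖g‖ * ‖w - EuclideanSpace.single ν 1‖ :=
      abs_real_inner_le_norm _ _
    rw [inner_sub_right, hinner, hinner2, hgnorm, one_mul] at hcs
    calc 1 / Real.sqrt m ≤ |g ν| := hν'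
      _ = |0 - g ν| := by rw [zero_sub, abs_neg]
      _ ≤ ‖w - EuclideanSpace.single ν 1‖ := by simpa using hcs
  exact ⟨ν, key _ (Submodule.coe_mem _), key⟩
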